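/- Let I be a nontrivial interval of ℝ, n a nonnegative integer, and f : I → ℝ a C^n function. If p ∈ I satisfies D^n f(p) ≠ 0, then for every ε > 0 there exists q ∈ I with |q − p| < ε and D^j f(q) ≠ 0 for all j = 0,…,n. -/

import Mathlib

open Set MeasureTheory

/-- `K` is closed and discrete in `I`: every point of `I` has a punctured
neighborhood missing `K`. -/
def ClosedDiscreteIn (K I : Set ℝ) : Prop :=
  K ⊆ I ∧ ∀ x ∈ I, ∃ ε > 0, ∀ y ∈ K, |y - x| < ε → y = x

/-- `f` is (non-strictly) monotone on `S`. -/
def MonoOn (f : ℝ → ℝ) (S : Set ℝ) : Prop :=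
  MonotoneOn f S ∨ AntitoneOn f S

/-- `K` witnesses the piecewise monotonicity of `f` on `I`. -/
def Witnesses (f : ℝ → ℝ) (I K : Set ℝ) : Prop :=
  ClosedDiscreteIn K I ∧
    ∀ x ∈ I \ K, MonoOn f (connectedComponentIn (I \ K) x)

/-- `f` is piecewise monotone on `I`. -/
def PiecewiseMonotoneOn (f : ℝ → ℝ) (I : Set ℝ) : Prop :=
  ∃ K, Witnesses f I K

/-- The platform of `f` containing `p`: the connected component of the fiber
of `f` (within `I`) containing `p`. -/
def Platform (f : ℝ → ℝ) (I : Set ℝ) (p : ℝ) : Set ℝ :=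
  connectedComponentIn {x ∈ I | f x = f p} p

/-- `P` is a platform of `f` on `I`. -/
def IsPlatform (f : ℝ → ℝ) (I P : Set ℝ) : Prop :=
  ∃ p ∈ I, P = Platform f I p

/-- `P` is a turning platform of `f` on `I`. -/
def IsTurningPlatform (f : ℝ → ℝ) (I P : Set ℝ) : Prop :=
  IsPlatform f I P ∧
  ∃ a b c ε, a ≤ b ∧ P = Icc a b ∧ (∀ x ∈ P, f x = c) ∧ 0 < ε ∧
    Ioo (a - ε) (b + ε) ⊆ I ∧
    ((∀ x ∈ Ioo (a - ε) (b + ε) \ P, c < f x) ∨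
     (∀ x ∈ Ioo (a - ε) (b + ε) \ P, f x < c))

/-- `x` is a turning point of `f` on `I`. -/
def IsTurningPoint (f : ℝ → ℝ) (I : Set ℝ) (x : ℝ) : Prop :=
  ∃ P, IsTurningPlatform f I P ∧ x ∈ P

/-- If `D^n f(p) ≠ 0` then arbitrarily close to `p` there are points where all
derivatives of `f` of order `≤ n` are nonzero. -/
theorem exists_near_point_all_derivs_ne_zero
    (n : ℕ) (I : Set ℝ) (hI : I.OrdConnected) (hnt : I.Nontrivial)
    (f : ℝ → ℝ) (hf : ContDiffOn ℝ n f I)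
    (p : ℝ) (hp : p ∈ I) (hpn : iteratedDerivWithin n f I p ≠ 0) :
    ∀ ε > 0, ∃ q ∈ I, |q - p| < ε ∧
      ∀ j ≤ n, iteratedDerivWithin j f I q ≠ 0 := by
  -- I is convex with nonempty interior, hence has unique differentiability
  have hconv : Convex ℝ I := convex_iff_ordConnected.mpr hI
  obtain ⟨a, ha, b, hb, hab⟩ := hnt
  have hab' : ∃ a b, a ∈ I ∧ b ∈ I ∧ a < b := by
    rcases lt_or_gt_of_ne hab with h | h
    exacts [⟨a, b, ha, hb, h⟩, ⟨b, a, hb, ha, h⟩]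
  obtain ⟨a, b, ha, hb, hab⟩ := hab'
  have hIoo : Ioo a b ⊆ interior I := by
    apply interior_maximal _ isOpen_Ioo
    intro x hx
    exact hI.out ha hb ⟨hx.1.le, hx.2.le⟩
  have hUD : UniqueDiffOn ℝ I :=
    uniqueDiffOn_convex hconv ⟨(a + b) / 2, hIoo ⟨by linarith, by linarith⟩⟩
  have hcont : ∀ j : ℕ, j ≤ n → ContinuousOn (iteratedDerivWithin j f I) I := by
    intro j hj
    exact hf.continuousOn_iteratedDerivWithin (by exact_mod_cast hj) hUD
  suffices S : ∀ k, k ≤ n → ∀ p ∈ I,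
      (∀ j, k ≤ j → j ≤ n → iteratedDerivWithin j f I p ≠ 0) →
      ∀ ε > 0, ∃ q ∈ I, |q - p| < ε ∧ ∀ j ≤ n, iteratedDerivWithin j f I q ≠ 0 by
    intro ε hε
    refine S n le_rfl p hp (fun j hj hj' => ?_) ε hε
    rw [le_antisymm hj' hj]; exact hpn
  intro k
  induction k with
  | zero =>
    intro _ p hp h ε hε
    exact ⟨p, hp, by simpa using hε, fun j hj => h j (Nat.zero_le j) hj⟩
  | succ k ih =>
    intro hk p hp h ε hε
    -- eventually all derivs of order in [k+1, n] are nonzero near p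
    have hev : ∀ᶠ x in nhdsWithin p I, ∀ j ∈ Finset.Icc (k + 1) n,
        iteratedDerivWithin j f I x ≠ 0 := by
      rw [Filter.eventually_all_finset]
      intro j hj
      rw [Finset.mem_Icc] at hj
      exact (hcont j hj.2 p hp).eventually (eventually_ne_nhds (h j hj.1 hj.2))
    obtain ⟨t, ht, hδ, hδpos, hball⟩ : ∃ t ∈ nhdsWithin p I, ∃ δ > 0,
        Metric.ball p δ ∩ I ⊆ {x | ∀ j ∈ Finset.Icc (k + 1) n, iteratedDerivWithin j f I x ≠ 0} := by
      refine ⟨_, hev, ?_⟩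
      exact Metric.mem_nhdsWithin_iff.mp hev
    clear ht; clear t
    set r := min hδ (ε / 2) with hr
    have hrpos : 0 < r := lt_min hδpos (by linarith)
    -- find a point in the small ball where the k-th derivative is nonzero
    have hq : ∃ q ∈ I, |q - p| < r ∧ iteratedDerivWithin k f I q ≠ 0 := by
      by_contra hcon
      push_neg at hcon
      have hev0 : iteratedDerivWithin k f I =ᶠ[nhdsWithin p I] fun _ => (0 : ℝ) := by
        filter_upwards [self_mem_nhdsWithin,
          mem_nhdsWithin_of_mem_nhds (Metric.ball_mem_nhds p hrpos)] with x hxI hxb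
        exact hcon x hxI (by rwa [Metric.mem_ball, Real.dist_eq] at hxb)
      have hd0 : derivWithin (iteratedDerivWithin k f I) I p = 0 := by
        rw [hev0.derivWithin_eq (hcon p hp (by simpa using hrpos))]
        exact (hasDerivWithinAt_const p I (0 : ℝ)).derivWithin (hUD p hp)
      exact h (k + 1) le_rfl hk (by rw [iteratedDerivWithin_succ]; exact hd0)
    obtain ⟨q, hqI, hqr, hqk⟩ := hq
    have hq' : ∀ j, k ≤ j → j ≤ n → iteratedDerivWithin j f I q ≠ 0 := by
      intro j hj hj'
      rcases eq_or_lt_of_le hj with rfl | hlt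
      · exact hqk
      · exact hball ⟨by rw [Metric.mem_ball, Real.dist_eq]; exact hqr.trans_le (min_le_left _ _), hqI⟩
          j (Finset.mem_Icc.mpr ⟨hlt, hj'⟩)
    obtain ⟨q', hq'I, hq'd, hq'all⟩ := ih (Nat.le_of_succ_le hk) q hqI hq' (ε / 2) (by linarith)
    refine ⟨q', hq'I, ?_, hq'all⟩
    calc |q' - p| ≤ |q' - q| + |q - p| := abs_sub_le _ _ _
      _ < ε / 2 + ε / 2 := add_lt_add hq'd (hqr.trans_le (min_le_right _ _))
      _ = ε := by ring
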